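/- Let G be a finite simple graph in which every vertex has degree exactly 3, with n = |V(G)| = 2^m for some m ≥ 1, let k be an integer with 1 < k < n−1, and let G' (with weights, β, α and k' as specified) be the associated gadget graph. Let H be the subgraph of G' induced by V(T_1) ∪ D, where D ⊆ {v_1 : v ∈ V(G)} ∪ {v_{g1} : v ∈ V(G)}; the vertices of D are called dangling. If some two dangling vertices are adjacent in G', then wtd(H) ≥ α + 3. -/

import Mathlib

/-- A treedepth decomposition of a simple graph `G`: a partial order `le` on the
vertices such that the set of elements below any vertex is linearly ordered, and
the endpoints of every edge are comparable. -/
structure TDDecomp {V : Type*} (G : SimpleGraph V) where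
  le : V → V → Prop
  le_refl : ∀ x, le x x
  le_antisymm : ∀ x y, le x y → le y x → x = y
  le_trans : ∀ x y z, le x y → le y z → le x z
  down_linear : ∀ x y z, le y x → le z x → le y z ∨ le z y
  adj_comparable : ∀ u v, G.Adj u v → le u v ∨ le v u

/-- A chain of a treedepth decomposition: a finite set of pairwise comparable vertices. -/
def TDDecomp.IsChain {V : Type*} {G : SimpleGraph V} (T : TDDecomp G) (C : Finset V) : Prop :=
  ∀ x ∈ C, ∀ y ∈ C, T.le x y ∨ T.le y x

/-- The weighted depth of a treedepth decomposition: the maximum over all chains `C`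
of the total weight of `C`. -/
noncomputable def TDDecomp.weightedDepth {V : Type*} {G : SimpleGraph V}
    (T : TDDecomp G) (w : V → ℕ) : ℕ :=
  sSup {s | ∃ C : Finset V, T.IsChain C ∧ s = C.sum w}

/-- The weighted treedepth of `G` with weight function `w`: the minimum weighted depth
over all treedepth decompositions of `G`. -/
noncomputable def wtd {V : Type*} (G : SimpleGraph V) (w : V → ℕ) : ℕ :=
  sInf {s | ∃ T : TDDecomp G, s = T.weightedDepth w}

/-- Vertices of the gadget graph `G'` built from a cubic graph `G` on `2^m` vertices:
`copy v i` is `v_{i+1}` (the two copies `v_1, v_2` of `v`), `guard v i` is `v_{g(i+1)}`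
(the three vertices `v_{g1}, v_{g2}, v_{g3}`), and `tree t i j` is the `j`-th vertex at
depth `i` of the complete binary tree `T_{t+1}` (depth `m` vertices are the `2^m` leaves). -/
inductive GadgetV (V : Type*) (m : ℕ) where
  | copy : V → Fin 2 → GadgetV V m
  | guard : V → Fin 3 → GadgetV V m
  | tree : Fin 3 → (i : Fin (m + 1)) → Fin (2 ^ i.val) → GadgetV V m

/-- The base relation generating the edges of `G'` (for `e : V ≃ Fin (2^m)` the
identification of `V(G)` with the leaves of each tree):
copies of adjacent vertices are adjacent (`u_1v_1, u_2v_2, u_1v_2, u_2v_1`);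
each `v_{gi}` is adjacent to `v_1` and `v_2`; consecutive levels of each complete
binary tree `T_t` are joined (child `j'` at depth `i+1` to parent `j'/2` at depth `i`);
and `v_1, v_{g1}` are joined to the leaf `v_{t_1}` of `T_1`, `v_2, v_{g2}` to the leaf
`v_{t_2}` of `T_2`, and `v_{g3}` to the leaf `v_{t_3}` of `T_3`. -/
def gadgetRel {V : Type*} {m : ℕ} (G : SimpleGraph V) (e : V ≃ Fin (2 ^ m)) :
    GadgetV V m → GadgetV V m → Prop
  | .copy u _, .copy v _ => G.Adj u v
  | .copy u _, .guard v _ => u = v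
  | .copy u i, .tree t d j => (t : ℕ) = (i : ℕ) ∧ (d : ℕ) = m ∧ (j : ℕ) = (e u : ℕ)
  | .guard u i, .tree t d j => (t : ℕ) = (i : ℕ) ∧ (d : ℕ) = m ∧ (j : ℕ) = (e u : ℕ)
  | .tree t d j, .tree t' d' j' => t = t' ∧ (d : ℕ) + 1 = (d' : ℕ) ∧ (j' : ℕ) / 2 = (j : ℕ)
  | _, _ => False

/-- The gadget graph `G'`. -/
def gadget {V : Type*} {m : ℕ} (G : SimpleGraph V) (e : V ≃ Fin (2 ^ m)) :
    SimpleGraph (GadgetV V m) :=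
  SimpleGraph.fromRel (gadgetRel G e)

/-- The weight function of `G'` (with parameter `β`): copies `v_1, v_2` have weight `2`,
the `v_{gi}` have weight `1`, and a tree vertex at depth `i` has weight `β + 3i`. -/
def gadgetW {V : Type*} {m : ℕ} (β : ℕ) : GadgetV V m → ℕ
  | .copy _ _ => 2
  | .guard _ _ => 1
  | .tree _ i _ => β + 3 * (i : ℕ)
namespace Stmt15Aux

/-! ### Finiteness of `GadgetV` -/

private def enc {V : Type*} {m : ℕ} : GadgetV V m →
    (V × Fin 2) ⊕ (V × Fin 3) ⊕ (Fin 3 × Σ i : Fin (m + 1), Fin (2 ^ (i : ℕ))) :=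
  fun x => match x with
  | .copy v i => .inl (v, i)
  | .guard v i => .inr (.inl (v, i))
  | .tree t i j => .inr (.inr (t, ⟨i, j⟩))

instance {V : Type*} {m : ℕ} [Finite V] : Finite (GadgetV V m) := by
  apply Finite.of_injective enc
  intro a b h
  cases a <;> cases b <;> simp [enc] at h <;> try (obtain ⟨h1, h2⟩ := h)
  · subst h1; subst h2; rfl
  · subst h1; subst h2; rfl
  · obtain ⟨h2, h3⟩ := h2
    subst h1; subst h2
    rw [eq_of_heq h3]

/-! ### generic order lemmas -/

theorem exists_min {α : Type*} (le : α → α → Prop) (hrefl : ∀ a, le a a)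
    (htrans : ∀ a b c, le a b → le b c → le a c) (X : Finset α) (hne : X.Nonempty) :
    ∃ r ∈ X, ∀ s ∈ X, le s r → le r s := by
  classical
  induction X using Finset.induction_on with
  | empty => simp at hne
  | @insert a X' ha ih =>
    rcases X'.eq_empty_or_nonempty with rfl | hne'
    · exact ⟨a, Finset.mem_insert_self a _, by
        intro s hs _
        rcases Finset.mem_insert.1 hs with rfl | hs
        · exact hrefl _
        · simp at hs⟩
    · obtain ⟨r', hr'X, hr'⟩ := ih hne'
      by_cases hle : le a r'
      · refine ⟨a, Finset.mem_insert_self a _, ?_⟩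
        intro s hs hsa
        rcases Finset.mem_insert.1 hs with rfl | hs
        · exact hrefl _
        · exact htrans a r' s hle (hr' s hs (htrans s a r' hsa hle))
      · refine ⟨r', Finset.mem_insert_of_mem hr'X, ?_⟩
        intro s hs hsr
        rcases Finset.mem_insert.1 hs with rfl | hs
        · exact absurd hsr hle
        · exact hr' s hs hsr

/-- comparability relation restricted to a finset -/
def crel {γ : Type*} {H : SimpleGraph γ} (T : TDDecomp H) (X : Finset γ) (p q : γ) : Prop :=
  p ∈ X ∧ q ∈ X ∧ (T.le p q ∨ T.le q p)

theorem crel_symm {γ : Type*} {H : SimpleGraph γ} (T : TDDecomp H) (X : Finset γ) :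
    Symmetric (crel T X) := fun _ _ h => ⟨h.2.1, h.1, h.2.2.symm⟩

theorem exists_least {γ : Type*} {H : SimpleGraph γ} (T : TDDecomp H) (X : Finset γ)
    (hne : X.Nonempty)
    (hconn : ∀ a ∈ X, ∀ b ∈ X, Relation.ReflTransGen (crel T X) a b) :
    ∃ r ∈ X, ∀ s ∈ X, T.le r s := by
  obtain ⟨r, hrX, hmin⟩ := exists_min T.le T.le_refl T.le_trans X hne
  have key : ∀ s, Relation.ReflTransGen (crel T X) r s → T.le r s := by
    intro s h
    induction h with
    | refl => exact T.le_refl r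
    | tail h1 h2 ih =>
      obtain ⟨hbX, hcX, hcomp⟩ := h2
      rcases hcomp with h | h
      · exact T.le_trans _ _ _ ih h
      · rcases T.down_linear _ _ _ ih h with h' | h'
        · exact h'
        · exact hmin _ hcX h'
  exact ⟨r, hrX, fun s hs => key s (hconn r hrX s hs)⟩

theorem chain_insert {γ : Type*} [DecidableEq γ] {H : SimpleGraph γ} (T : TDDecomp H) (C : Finset γ) (r : γ)
    (hC : T.IsChain C) (hle : ∀ c ∈ C, T.le r c) : T.IsChain (insert r C) := by
  intro a ha b hb
  rcases Finset.mem_insert.1 ha with rfl | ha' <;> rcases Finset.mem_insert.1 hb with rfl | hb'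
  · exact Or.inl (T.le_refl _)
  · exact Or.inl (hle b hb')
  · exact Or.inr (hle _ ha')
  · exact hC _ ha' b hb'

end Stmt15Aux
set_option linter.unusedSectionVars false
namespace Stmt15Aux

section Gadget

variable {V : Type*} [Fintype V] {m : ℕ}

/-- dangling vertex predicate -/
def isDang {V : Type*} {m : ℕ} : GadgetV V m → Prop
  | .copy _ _ => True
  | .guard _ _ => True
  | .tree _ _ _ => False

/-- descendant-of-`(d, jr)`-in-`T_1` predicate -/
def isDesc (m : ℕ) {V : Type*} (d jr : ℕ) : GadgetV V m → Prop
  | .tree t i j => t = 0 ∧ d ≤ (i : ℕ) ∧ (j : ℕ) / 2 ^ ((i : ℕ) - d) = jr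
  | _ => False

theorem not_isDesc_of_isDang {v : GadgetV V m} (h : isDang v) (d jr : ℕ) :
    ¬ isDesc m d jr v := by
  cases v <;> simp [isDesc, isDang] at h ⊢

theorem isDesc_elim {v : GadgetV V m} {d jr : ℕ} (h : isDesc m d jr v) (β : ℕ) :
    ∃ i j : ℕ, i ≤ m ∧ j < 2 ^ i ∧ d ≤ i ∧ j / 2 ^ (i - d) = jr ∧
      gadgetW β v = β + 3 * i ∧
      (∀ d' jr', isDesc m d' jr' v ↔ (d' ≤ i ∧ j / 2 ^ (i - d') = jr')) := by
  cases v with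
  | tree t fi fj =>
    obtain ⟨ht, hdi, hanc⟩ := h
    subst ht
    exact ⟨fi, fj, Nat.lt_succ_iff.mp fi.isLt, fj.isLt, hdi, hanc, rfl,
      fun d' jr' => by simp [isDesc]⟩
  | copy _ _ => exact absurd h (by simp [isDesc])
  | guard _ _ => exact absurd h (by simp [isDesc])

variable (G : SimpleGraph V) (e : V ≃ Fin (2 ^ m)) (Sv : Set (GadgetV V m))
  (hSv : ∀ (i : Fin (m + 1)) (j : Fin (2 ^ (i : ℕ))), GadgetV.tree 0 i j ∈ Sv)

noncomputable instance : Fintype ↥Sv := Fintype.ofFinite _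

/-- tree vertex of `T_1` as an element of the induced vertex set -/
def tv (i : ℕ) (hi : i ≤ m) (j : ℕ) (hj : j < 2 ^ i) : ↥Sv :=
  ⟨GadgetV.tree 0 ⟨i, Nat.lt_succ_of_le hi⟩ ⟨j, hj⟩, hSv _ _⟩

theorem tv_eq {i i' j j' : ℕ} (h1 : i = i') (h2 : j = j') (hi : i ≤ m) (hj : j < 2 ^ i)
    (hi' : i' ≤ m) (hj' : j' < 2 ^ i') :
    tv Sv hSv i hi j hj = tv Sv hSv i' hi' j' hj' := by
  subst h1; subst h2; rfl

theorem isDesc_tv {d jr : ℕ} (i : ℕ) (hi : i ≤ m) (j : ℕ) (hj : j < 2 ^ i)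
    (h1 : d ≤ i) (h2 : j / 2 ^ (i - d) = jr) : isDesc m d jr (tv Sv hSv i hi j hj).1 :=
  ⟨rfl, h1, h2⟩

theorem tv_spec {v : ↥Sv} {d jr : ℕ} (h : isDesc m d jr v.1) :
    ∃ (i j : ℕ) (hi : i ≤ m) (hj : j < 2 ^ i), v = tv Sv hSv i hi j hj ∧
      d ≤ i ∧ j / 2 ^ (i - d) = jr := by
  obtain ⟨vv, hvmem⟩ := v
  cases vv with
  | tree t fi fj =>
    obtain ⟨ht, hdi, hanc⟩ := h
    subst ht
    refine ⟨fi, fj, Nat.lt_succ_iff.mp fi.isLt, fj.isLt, ?_, hdi, hanc⟩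
    apply Subtype.ext
    show GadgetV.tree 0 fi fj = GadgetV.tree 0 ⟨(fi : ℕ), _⟩ ⟨(fj : ℕ), _⟩
    cases fi; cases fj; rfl
  | copy _ _ => exact absurd h (by simp [isDesc])
  | guard _ _ => exact absurd h (by simp [isDesc])

/-- the finset of descendants of `(d, jr)` in `T_1` -/
noncomputable def DescF (d jr : ℕ) : Finset ↥Sv :=
  @Finset.filter _ (fun v => isDesc m d jr v.1) (Classical.decPred _) Finset.univ

theorem mem_DescF {d jr : ℕ} {v : ↥Sv} : v ∈ DescF Sv d jr ↔ isDesc m d jr v.1 := by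
  simp [DescF]

theorem isDesc_mono {d jr : ℕ} {v : GadgetV V m} (c : ℕ) (hc : c / 2 = jr)
    (h : isDesc m (d + 1) c v) : isDesc m d jr v := by
  cases v with
  | tree t fi fj =>
    obtain ⟨ht, hdi, hanc⟩ := h
    refine ⟨ht, by omega, ?_⟩
    have h2 : (fi : ℕ) - d = ((fi : ℕ) - (d + 1)) + 1 := by omega
    rw [h2, pow_succ, ← Nat.div_div_eq_div_mul, hanc, hc]
  | copy _ _ => exact absurd h (by simp [isDesc])
  | guard _ _ => exact absurd h (by simp [isDesc])

theorem div2_lt {i j : ℕ} (h1 : 1 ≤ i) (hj : j < 2 ^ i) : j / 2 < 2 ^ (i - 1) := by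
  have : 2 ^ i = 2 ^ (i - 1) * 2 := by
    rw [← pow_succ]; congr 1; omega
  rw [Nat.div_lt_iff_lt_mul (by norm_num)]
  omega

/-- adjacency between parent and child in `T_1` -/
theorem adj_parent_child (i j : ℕ) (h1 : 1 ≤ i) (him : i ≤ m) (hj : j < 2 ^ i) :
    (SimpleGraph.induce Sv (gadget G e)).Adj
      (tv Sv hSv (i - 1) (by omega) (j / 2) (div2_lt h1 hj)) (tv Sv hSv i him j hj) := by
  show (gadget G e).Adj _ _
  rw [gadget, SimpleGraph.fromRel_adj]
  constructor
  · intro h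
    have : i - 1 = i := by
      have := congrArg (fun x => match x with
        | GadgetV.tree _ fi _ => (fi : ℕ)
        | _ => 0) h
      simpa [tv] using this
    omega
  · left
    exact ⟨rfl, by simp; omega, rfl⟩

/-- adjacency of a dangler (`copy u 0` or `guard u 0`) with leaf `e u` of `T_1` -/
theorem adj_dang_leaf (u : V) (x : ↥Sv)
    (hx : x.1 = GadgetV.copy u 0 ∨ x.1 = GadgetV.guard u 0) :
    (SimpleGraph.induce Sv (gadget G e)).Adj x (tv Sv hSv m le_rfl (e u) (e u).isLt) := by
  obtain ⟨xv, hxm⟩ := x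
  simp only at hx
  rcases hx with rfl | rfl <;>
  · show (gadget G e).Adj _ _
    rw [gadget, SimpleGraph.fromRel_adj]
    exact ⟨by simp [tv], Or.inl ⟨rfl, rfl, rfl⟩⟩

end Gadget

end Stmt15Aux
namespace Stmt15Aux

section Gadget2
set_option linter.unusedSectionVars false

variable {V : Type*} [Fintype V] {m : ℕ}

/-- weight of a root-to-leaf path of the subtree rooted at depth `d` -/
def sfun (m β d : ℕ) : ℕ := ∑ i ∈ Finset.Icc d m, (β + 3 * i)

theorem sfun_last (β : ℕ) : sfun m β m = β + 3 * m := by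
  simp [sfun]

theorem sfun_step {β d : ℕ} (hd : d < m) : sfun m β d = (β + 3 * d) + sfun m β (d + 1) := by
  have h : Finset.Icc d m = insert d (Finset.Icc (d + 1) m) := by
    ext a
    simp only [Finset.mem_Icc, Finset.mem_insert]
    omega
  rw [sfun, h, Finset.sum_insert (by simp), sfun]

variable (G : SimpleGraph V) (e : V ≃ Fin (2 ^ m)) (Sv : Set (GadgetV V m))
  (hSv : ∀ (i : Fin (m + 1)) (j : Fin (2 ^ (i : ℕ))), GadgetV.tree 0 i j ∈ Sv)
  (T : TDDecomp (SimpleGraph.induce Sv (gadget G e)))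

/-- every descendant of `(d, jr)` is `crel`-connected to the root `(d, jr)` -/
theorem rtg_desc (X : Finset ↥Sv) {d jr : ℕ} (hd : d ≤ m) (hjr : jr < 2 ^ d)
    (hsub : ∀ v : ↥Sv, isDesc m d jr v.1 → v ∈ X) :
    ∀ v : ↥Sv, isDesc m d jr v.1 →
      Relation.ReflTransGen (crel T X) (tv Sv hSv d hd jr hjr) v := by
  have aux : ∀ (k i : ℕ) (hi : i ≤ m) (j : ℕ) (hj : j < 2 ^ i), d ≤ i →
      j / 2 ^ (i - d) = jr → i - d ≤ k →
      Relation.ReflTransGen (crel T X) (tv Sv hSv d hd jr hjr) (tv Sv hSv i hi j hj) := by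
    intro k
    induction k with
    | zero =>
      intro i hi j hj hdi hanc hik
      have hid : i = d := by omega
      have hje : j = jr := by
        subst hid; simpa using hanc
      rw [tv_eq Sv hSv hid hje hi hj hd hjr]
    | succ k ih =>
      intro i hi j hj hdi hanc hik
      by_cases hid : i = d
      · have hje : j = jr := by subst hid; simpa using hanc
        rw [tv_eq Sv hSv hid hje hi hj hd hjr]
      · have h1 : 1 ≤ i := by omega
        have hanc' : (j / 2) / 2 ^ ((i - 1) - d) = jr := by
          rw [Nat.div_div_eq_div_mul]
          have h2 : 2 * 2 ^ ((i - 1) - d) = 2 ^ (i - d) := by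
            rw [mul_comm, ← pow_succ]
            congr 1
            omega
          rw [h2, hanc]
        have hprev := ih (i - 1) (by omega) (j / 2) (div2_lt h1 hj) (by omega) hanc' (by omega)
        refine hprev.tail ?_
        have hadj := adj_parent_child G e Sv hSv i j h1 hi hj
        exact ⟨hsub _ (isDesc_tv Sv hSv (i - 1) (by omega) (j / 2) (div2_lt h1 hj)
            (by omega) hanc'),
          hsub _ (isDesc_tv Sv hSv i hi j hj hdi hanc),
          T.adj_comparable _ _ hadj⟩
  intro v hv
  obtain ⟨i, j, hi, hj, rfl, hdi, hanc⟩ := tv_spec Sv hSv hv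
  exact aux (i - d) i hi j hj hdi hanc le_rfl

end Gadget2

end Stmt15Aux
namespace Stmt15Aux

section Gadget3
set_option linter.unusedSectionVars false

variable {V : Type*} [Fintype V] {m : ℕ}
variable (G : SimpleGraph V) (e : V ≃ Fin (2 ^ m)) (Sv : Set (GadgetV V m))
  (hSv : ∀ (i : Fin (m + 1)) (j : Fin (2 ^ (i : ℕ))), GadgetV.tree 0 i j ∈ Sv)
  (T : TDDecomp (SimpleGraph.induce Sv (gadget G e))) (β : ℕ)

theorem root_self_desc {d jr : ℕ} (hd : d ≤ m) (hjr : jr < 2 ^ d) :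
    isDesc m d jr (tv Sv hSv d hd jr hjr).1 :=
  isDesc_tv Sv hSv d hd jr hjr le_rfl (by simp)

theorem hconn_of_anchor (X : Finset ↥Sv) (anchor : ↥Sv)
    (h : ∀ b ∈ X, Relation.ReflTransGen (crel T X) anchor b) :
    ∀ a ∈ X, ∀ b ∈ X, Relation.ReflTransGen (crel T X) a b := by
  intro a ha b hb
  exact ((letI : Std.Symm (crel T X) := ⟨crel_symm T X⟩; Std.Symm.symm _ _) (h a ha)).trans (h b hb)

include hSv

/-- Claim C: a subtree rooted at `(d, jr)` guarantees a chain of weight `sfun m β d`. -/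
theorem lemC : ∀ (fuel d jr : ℕ), m - d ≤ fuel → d ≤ m → jr < 2 ^ d →
    ∃ C : Finset ↥Sv, T.IsChain C ∧ (∀ v ∈ C, isDesc m d jr v.1) ∧
      sfun m β d ≤ ∑ v ∈ C, gadgetW β v.1 := by
  classical
  have base : ∀ jr : ℕ, jr < 2 ^ m →
      ∃ C : Finset ↥Sv, T.IsChain C ∧ (∀ v ∈ C, isDesc m m jr v.1) ∧
      sfun m β m ≤ ∑ v ∈ C, gadgetW β v.1 := by
    intro jr hjr
    refine ⟨{tv Sv hSv m le_rfl jr hjr}, ?_, ?_, ?_⟩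
    · intro a ha b hb
      simp only [Finset.mem_singleton] at ha hb
      subst ha; subst hb
      exact Or.inl (T.le_refl _)
    · intro v hv
      simp only [Finset.mem_singleton] at hv
      subst hv
      exact root_self_desc Sv hSv le_rfl hjr
    · simp [sfun_last, tv, gadgetW]
  intro fuel
  induction fuel with
  | zero =>
    intro d jr hfuel hd hjr
    have hdm : d = m := by omega
    subst hdm
    exact base jr hjr
  | succ fuel ih =>
    intro d jr hfuel hd hjr
    by_cases hdm : d = m
    · subst hdm; exact base jr hjr
    have hdlt : d < m := by omega
    have hrootX : tv Sv hSv d hd jr hjr ∈ DescF Sv d jr :=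
      (mem_DescF Sv).2 (root_self_desc Sv hSv hd hjr)
    obtain ⟨r, hrX, hrle⟩ := exists_least T (DescF Sv d jr) ⟨_, hrootX⟩
      (hconn_of_anchor G e Sv T _ _
        (fun b hb => rtg_desc G e Sv hSv T _ hd hjr (fun v hv => (mem_DescF Sv).2 hv)
          b ((mem_DescF Sv).1 hb)))
    have hrdesc := (mem_DescF Sv).1 hrX
    obtain ⟨i, j, him, hjlt, hdi, hanc, hw, hiff⟩ := isDesc_elim hrdesc β
    have hp : 2 ^ (d + 1) = 2 ^ d * 2 := pow_succ 2 d
    by_cases hieq : i = d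
    · -- r is the root; recurse on child 2*jr
      have hc2 : 2 * jr < 2 ^ (d + 1) := by omega
      obtain ⟨C', hC'chain, hC'mem, hC'sum⟩ := ih (d + 1) (2 * jr) (by omega) (by omega) hc2
      have hmono : ∀ v : ↥Sv, isDesc m (d + 1) (2 * jr) v.1 → isDesc m d jr v.1 :=
        fun v hv => isDesc_mono (2 * jr) (by omega) hv
      have hrnot : r ∉ C' := by
        intro hrC
        have := ((hiff (d + 1) (2 * jr)).1 (hC'mem r hrC)).1
        omega
      refine ⟨insert r C', chain_insert T C' r hC'chain
        (fun c hc => hrle c ((mem_DescF Sv).2 (hmono c (hC'mem c hc)))), ?_, ?_⟩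
      · intro v hv
        rcases Finset.mem_insert.1 hv with rfl | hv'
        · exact hrdesc
        · exact hmono v (hC'mem v hv')
      · rw [Finset.sum_insert hrnot, hw, sfun_step hdlt]
        exact Nat.add_le_add (by omega) hC'sum
    · -- r lies strictly below the root; recurse on the child avoiding r
      have hdi1 : d + 1 ≤ i := by omega
      have hcr2 : (j / 2 ^ (i - (d + 1))) / 2 = jr := by
        rw [Nat.div_div_eq_div_mul]
        have h2 : 2 ^ (i - (d + 1)) * 2 = 2 ^ (i - d) := by
          rw [← pow_succ]; congr 1; omega
        rw [h2, hanc]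
      set cr := j / 2 ^ (i - (d + 1)) with hcr
      set c' := if cr = 2 * jr then 2 * jr + 1 else 2 * jr with hc'
      have hc'lt : c' < 2 ^ (d + 1) := by rw [hc']; split_ifs <;> omega
      have hc'2 : c' / 2 = jr := by rw [hc']; split_ifs <;> omega
      have hcrne : c' ≠ cr := by rw [hc']; split_ifs with h <;> omega
      obtain ⟨C', hC'chain, hC'mem, hC'sum⟩ := ih (d + 1) c' (by omega) (by omega) hc'lt
      have hmono : ∀ v : ↥Sv, isDesc m (d + 1) c' v.1 → isDesc m d jr v.1 :=
        fun v hv => isDesc_mono c' hc'2 hv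
      have hrnot : r ∉ C' := by
        intro hrC
        have h2 := ((hiff (d + 1) c').1 (hC'mem r hrC)).2
        exact hcrne (by rw [hcr, h2])
      refine ⟨insert r C', chain_insert T C' r hC'chain
        (fun c hc => hrle c ((mem_DescF Sv).2 (hmono c (hC'mem c hc)))), ?_, ?_⟩
      · intro v hv
        rcases Finset.mem_insert.1 hv with rfl | hv'
        · exact hrdesc
        · exact hmono v (hC'mem v hv')
      · rw [Finset.sum_insert hrnot, hw, sfun_step hdlt]
        exact Nat.add_le_add (by omega) hC'sum

end Gadget3

end Stmt15Aux
namespace Stmt15Aux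

section Gadget4
set_option linter.unusedSectionVars false

variable {V : Type*} [Fintype V] {m : ℕ}
variable (G : SimpleGraph V) (e : V ≃ Fin (2 ^ m)) (Sv : Set (GadgetV V m))
  (hSv : ∀ (i : Fin (m + 1)) (j : Fin (2 ^ (i : ℕ))), GadgetV.tree 0 i j ∈ Sv)
  (T : TDDecomp (SimpleGraph.induce Sv (gadget G e))) (β : ℕ)

theorem ne_of_desc_dang {v z : ↥Sv} {d jr : ℕ} (hv : isDesc m d jr v.1) (hz : isDang z.1) :
    v ≠ z := by
  intro h
  rw [h] at hv
  exact not_isDesc_of_isDang hz d jr hv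

theorem chain_pair [DecidableEq ↥Sv] {a b : ↥Sv} (hab : T.le a b ∨ T.le b a) :
    T.IsChain {a, b} := by
  intro x hx y hy
  rcases Finset.mem_insert.1 hx with rfl | hx
  · rcases Finset.mem_insert.1 hy with rfl | hy
    · exact Or.inl (T.le_refl _)
    · rw [Finset.mem_singleton] at hy; subst hy; exact hab
  · rw [Finset.mem_singleton] at hx; subst hx
    rcases Finset.mem_insert.1 hy with rfl | hy
    · exact hab.symm
    · rw [Finset.mem_singleton] at hy; subst hy; exact Or.inl (T.le_refl _)

theorem pow_split {d : ℕ} (hd : d < m) : 2 ^ (d + 1) * 2 ^ (m - (d + 1)) = 2 ^ m := by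
  rw [← pow_add]; congr 1; omega

theorem child_lt {d ℓ : ℕ} (hd : d < m) (hℓ : ℓ < 2 ^ m) :
    ℓ / 2 ^ (m - (d + 1)) < 2 ^ (d + 1) := by
  rw [Nat.div_lt_iff_lt_mul (Nat.pow_pos (by norm_num))]
  calc ℓ < 2 ^ m := hℓ
  _ = 2 ^ (d + 1) * 2 ^ (m - (d + 1)) := (pow_split hd).symm

theorem child_anc {d ℓ jr : ℕ} (hd : d < m) (h : ℓ / 2 ^ (m - d) = jr) :
    (ℓ / 2 ^ (m - (d + 1))) / 2 = jr := by
  rw [Nat.div_div_eq_div_mul]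
  have h2 : 2 ^ (m - (d + 1)) * 2 = 2 ^ (m - d) := by
    rw [← pow_succ]; congr 1; omega
  rw [h2, h]

include hSv

/-- Claim B: a subtree rooted at `(d, jr)` together with one dangler `z` hanging at a
leaf of it guarantees a chain of weight `sfun m β d + w z`. -/
theorem lemB : ∀ (fuel d jr : ℕ), m - d ≤ fuel → d ≤ m → jr < 2 ^ d →
    ∀ (z : ↥Sv) (ℓ : ℕ) (hℓ : ℓ < 2 ^ m), isDang z.1 →
    (SimpleGraph.induce Sv (gadget G e)).Adj z (tv Sv hSv m le_rfl ℓ hℓ) →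
    ℓ / 2 ^ (m - d) = jr → gadgetW β z.1 ≤ 3 →
    ∃ C : Finset ↥Sv, T.IsChain C ∧ (∀ v ∈ C, isDesc m d jr v.1 ∨ v = z) ∧
      sfun m β d + gadgetW β z.1 ≤ ∑ v ∈ C, gadgetW β v.1 := by
  classical
  intro fuel
  induction fuel with
  | zero =>
    intro d jr hfuel hd hjr z ℓ hℓ hdang hadj hanc hwz
    have hdm : m = d := by omega
    subst hdm
    -- the chain {leaf, z}
    have hℓjr : ℓ = jr := by simpa using hanc
    subst hℓjr
    have hleaf : isDesc m m ℓ (tv Sv hSv m le_rfl ℓ hℓ).1 := root_self_desc Sv hSv le_rfl hℓ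
    have hne : tv Sv hSv m le_rfl ℓ hℓ ≠ z := ne_of_desc_dang Sv hleaf hdang
    refine ⟨{tv Sv hSv m le_rfl ℓ hℓ, z}, chain_pair G e Sv T
      ((T.adj_comparable _ _ hadj).symm), ?_, ?_⟩
    · intro v hv
      rcases Finset.mem_insert.1 hv with rfl | hv
      · exact Or.inl hleaf
      · simp only [Finset.mem_singleton] at hv
        subst hv; exact Or.inr rfl
    · rw [Finset.sum_pair hne, sfun_last]
      have : gadgetW β (tv Sv hSv m le_rfl ℓ hℓ).1 = β + 3 * m := rfl
      omega
  | succ fuel ih =>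
    intro d jr hfuel hd hjr z ℓ hℓ hdang hadj hanc hwz
    by_cases hdm : m = d
    · subst hdm
      have hℓjr : ℓ = jr := by simpa using hanc
      subst hℓjr
      have hleaf : isDesc m m ℓ (tv Sv hSv m le_rfl ℓ hℓ).1 := root_self_desc Sv hSv le_rfl hℓ
      have hne : tv Sv hSv m le_rfl ℓ hℓ ≠ z := ne_of_desc_dang Sv hleaf hdang
      refine ⟨{tv Sv hSv m le_rfl ℓ hℓ, z}, chain_pair G e Sv T
        ((T.adj_comparable _ _ hadj).symm), ?_, ?_⟩
      · intro v hv
        rcases Finset.mem_insert.1 hv with rfl | hv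
        · exact Or.inl hleaf
        · simp only [Finset.mem_singleton] at hv
          subst hv; exact Or.inr rfl
      · rw [Finset.sum_pair hne, sfun_last]
        have : gadgetW β (tv Sv hSv m le_rfl ℓ hℓ).1 = β + 3 * m := rfl
        omega
    · have hdlt : d < m := by omega
      -- set up the least element of X = {z} ∪ Desc(d, jr)
      set X : Finset ↥Sv := insert z (DescF Sv d jr) with hX
      have hsubX : ∀ v : ↥Sv, isDesc m d jr v.1 → v ∈ X :=
        fun v hv => Finset.mem_insert_of_mem ((mem_DescF Sv).2 hv)
      have hzX : z ∈ X := Finset.mem_insert_self _ _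
      have hleafdesc : isDesc m d jr (tv Sv hSv m le_rfl ℓ hℓ).1 :=
        isDesc_tv Sv hSv m le_rfl ℓ hℓ hd hanc
      have hanchor : ∀ b ∈ X, Relation.ReflTransGen (crel T X) (tv Sv hSv d hd jr hjr) b := by
        intro b hb
        rcases Finset.mem_insert.1 hb with rfl | hb
        · exact (rtg_desc G e Sv hSv T X hd hjr hsubX _ hleafdesc).tail
            ⟨hsubX _ hleafdesc, hzX, (T.adj_comparable _ _ hadj).symm⟩
        · exact rtg_desc G e Sv hSv T X hd hjr hsubX b ((mem_DescF Sv).1 hb)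
      obtain ⟨r, hrX, hrle⟩ := exists_least T X ⟨z, hzX⟩
        (hconn_of_anchor G e Sv T _ _ hanchor)
      rcases Finset.mem_insert.1 hrX with rfl | hrD
      · -- least is z itself : z + chain of C(d, jr)
        obtain ⟨C', hC'chain, hC'mem, hC'sum⟩ :=
          lemC G e Sv hSv T β m d jr (by omega) hd hjr
        have hrnot : r ∉ C' := fun hrC => ne_of_desc_dang Sv (hC'mem r hrC) hdang rfl
        refine ⟨insert r C', chain_insert T C' r hC'chain
          (fun c hc => hrle c (hsubX c (hC'mem c hc))), ?_, ?_⟩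
        · intro v hv
          rcases Finset.mem_insert.1 hv with rfl | hv'
          · exact Or.inr rfl
          · exact Or.inl (hC'mem v hv')
        · rw [Finset.sum_insert hrnot]
          omega
      · -- least is a tree vertex
        have hrdesc := (mem_DescF Sv).1 hrD
        obtain ⟨i, j, him, hjlt, hdi, hancr, hw, hiff⟩ := isDesc_elim hrdesc β
        have hp : 2 ^ (d + 1) = 2 ^ d * 2 := pow_succ 2 d
        have hrnz : r ≠ z := ne_of_desc_dang Sv hrdesc hdang
        set cl := ℓ / 2 ^ (m - (d + 1)) with hcl
        have hcllt : cl < 2 ^ (d + 1) := child_lt hdlt hℓ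
        have hcl2 : cl / 2 = jr := child_anc hdlt hanc
        have hleafcl : isDesc m (d + 1) cl (tv Sv hSv m le_rfl ℓ hℓ).1 :=
          isDesc_tv Sv hSv m le_rfl ℓ hℓ (by omega) rfl
        by_cases hrc : isDesc m (d + 1) cl r.1
        · -- r sits in the child subtree containing the leaf ℓ: use the other child
          obtain ⟨hdi1, hcrj⟩ := (hiff (d + 1) cl).1 hrc
          set c' := if cl = 2 * jr then 2 * jr + 1 else 2 * jr with hc'
          have hc'lt : c' < 2 ^ (d + 1) := by rw [hc']; split_ifs <;> omega
          have hc'2 : c' / 2 = jr := by rw [hc']; split_ifs <;> omega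
          have hc'ne : c' ≠ cl := by rw [hc']; split_ifs with h <;> omega
          obtain ⟨C', hC'chain, hC'mem, hC'sum⟩ :=
            lemC G e Sv hSv T β m (d + 1) c' (by omega) (by omega) hc'lt
          have hmono : ∀ v : ↥Sv, isDesc m (d + 1) c' v.1 → isDesc m d jr v.1 :=
            fun v hv => isDesc_mono c' hc'2 hv
          have hrnot : r ∉ C' := by
            intro hrC
            have h2 := ((hiff (d + 1) c').1 (hC'mem r hrC)).2
            exact hc'ne (by rw [← h2, hcrj])
          refine ⟨insert r C', chain_insert T C' r hC'chain
            (fun c hc => hrle c (hsubX c (hmono c (hC'mem c hc)))), ?_, ?_⟩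
          · intro v hv
            rcases Finset.mem_insert.1 hv with rfl | hv'
            · exact Or.inl hrdesc
            · exact Or.inl (hmono v (hC'mem v hv'))
          · rw [Finset.sum_insert hrnot, hw, sfun_step hdlt]
            omega
        · -- recurse into the child subtree containing the leaf ℓ
          obtain ⟨C', hC'chain, hC'mem, hC'sum⟩ := ih (d + 1) cl (by omega) (by omega) hcllt
            z ℓ hℓ hdang hadj rfl hwz
          have hmono : ∀ v : ↥Sv, isDesc m (d + 1) cl v.1 → isDesc m d jr v.1 :=
            fun v hv => isDesc_mono cl hcl2 hv
          have hrnot : r ∉ C' := by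
            intro hrC
            rcases hC'mem r hrC with h | h
            · exact hrc h
            · exact hrnz h
          refine ⟨insert r C', chain_insert T C' r hC'chain ?_, ?_, ?_⟩
          · intro c hc
            rcases hC'mem c hc with h | h
            · exact hrle c (hsubX c (hmono c h))
            · subst h; exact hrle c hzX
          · intro v hv
            rcases Finset.mem_insert.1 hv with rfl | hv'
            · exact Or.inl hrdesc
            · rcases hC'mem v hv' with h | h
              · exact Or.inl (hmono v h)
              · exact Or.inr h
          · rw [Finset.sum_insert hrnot, hw, sfun_step hdlt]
            omega

end Gadget4

end Stmt15Aux
namespace Stmt15Aux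

section Gadget5
set_option linter.unusedSectionVars false

variable {V : Type*} [Fintype V] {m : ℕ}
variable (G : SimpleGraph V) (e : V ≃ Fin (2 ^ m)) (Sv : Set (GadgetV V m))
  (hSv : ∀ (i : Fin (m + 1)) (j : Fin (2 ^ (i : ℕ))), GadgetV.tree 0 i j ∈ Sv)
  (T : TDDecomp (SimpleGraph.induce Sv (gadget G e))) (β : ℕ)

include hSv

/-- connectivity of the structure used in claims A and A' -/
theorem hconnA' [DecidableEq ↥Sv] (d j1 j2 : ℕ) (hd : d ≤ m) (hj1 : j1 < 2 ^ d) (hj2 : j2 < 2 ^ d)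
    (x y : ↥Sv) (ℓx ℓy : ℕ) (hℓx : ℓx < 2 ^ m) (hℓy : ℓy < 2 ^ m)
    (hadjx : (SimpleGraph.induce Sv (gadget G e)).Adj x (tv Sv hSv m le_rfl ℓx hℓx))
    (hadjy : (SimpleGraph.induce Sv (gadget G e)).Adj y (tv Sv hSv m le_rfl ℓy hℓy))
    (hadjxy : (SimpleGraph.induce Sv (gadget G e)).Adj x y)
    (hanc1 : ℓx / 2 ^ (m - d) = j1) (hanc2 : ℓy / 2 ^ (m - d) = j2) :
    ∀ a ∈ insert x (insert y (DescF Sv d j1 ∪ DescF Sv d j2)),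
    ∀ b ∈ insert x (insert y (DescF Sv d j1 ∪ DescF Sv d j2)),
      Relation.ReflTransGen
        (crel T (insert x (insert y (DescF Sv d j1 ∪ DescF Sv d j2)))) a b := by
  set X : Finset ↥Sv := insert x (insert y (DescF Sv d j1 ∪ DescF Sv d j2)) with hXdef
  have hsub1 : ∀ v : ↥Sv, isDesc m d j1 v.1 → v ∈ X := fun v hv =>
    Finset.mem_insert_of_mem (Finset.mem_insert_of_mem
      (Finset.mem_union_left _ ((mem_DescF Sv).2 hv)))
  have hsub2 : ∀ v : ↥Sv, isDesc m d j2 v.1 → v ∈ X := fun v hv =>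
    Finset.mem_insert_of_mem (Finset.mem_insert_of_mem
      (Finset.mem_union_right _ ((mem_DescF Sv).2 hv)))
  have hxX : x ∈ X := Finset.mem_insert_self _ _
  have hyX : y ∈ X := Finset.mem_insert_of_mem (Finset.mem_insert_self _ _)
  have hleafx : isDesc m d j1 (tv Sv hSv m le_rfl ℓx hℓx).1 :=
    isDesc_tv Sv hSv m le_rfl ℓx hℓx hd hanc1
  have hleafy : isDesc m d j2 (tv Sv hSv m le_rfl ℓy hℓy).1 :=
    isDesc_tv Sv hSv m le_rfl ℓy hℓy hd hanc2
  have hroot1 := rtg_desc G e Sv hSv T X hd hj1 hsub1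
  have hroot2 := rtg_desc G e Sv hSv T X hd hj2 hsub2
  have hx_leafx : Relation.ReflTransGen (crel T X) x (tv Sv hSv m le_rfl ℓx hℓx) :=
    Relation.ReflTransGen.single ⟨hxX, hsub1 _ hleafx, T.adj_comparable _ _ hadjx⟩
  have hxy : Relation.ReflTransGen (crel T X) x y :=
    Relation.ReflTransGen.single ⟨hxX, hyX, T.adj_comparable _ _ hadjxy⟩
  have hy_leafy : Relation.ReflTransGen (crel T X) y (tv Sv hSv m le_rfl ℓy hℓy) :=
    Relation.ReflTransGen.single ⟨hyX, hsub2 _ hleafy, T.adj_comparable _ _ hadjy⟩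
  have hanchor : ∀ b ∈ X, Relation.ReflTransGen (crel T X) x b := by
    intro b hb
    rcases Finset.mem_insert.1 hb with rfl | hb
    · exact Relation.ReflTransGen.refl
    rcases Finset.mem_insert.1 hb with rfl | hb
    · exact hxy
    rcases Finset.mem_union.1 hb with hb | hb
    · exact hx_leafx.trans (((letI : Std.Symm (crel T X) := ⟨crel_symm T X⟩; Std.Symm.symm _ _)
        (hroot1 _ hleafx)).trans (hroot1 b ((mem_DescF Sv).1 hb)))
    · exact (hxy.trans hy_leafy).trans (((letI : Std.Symm (crel T X) := ⟨crel_symm T X⟩; Std.Symm.symm _ _)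
        (hroot2 _ hleafy)).trans (hroot2 b ((mem_DescF Sv).1 hb)))
  exact hconn_of_anchor G e Sv T X x hanchor

end Gadget5

end Stmt15Aux

namespace Stmt15Aux

section Gadget6
set_option linter.unusedSectionVars false

variable {V : Type*} [Fintype V] {m : ℕ}
variable (G : SimpleGraph V) (e : V ≃ Fin (2 ^ m)) (Sv : Set (GadgetV V m))
  (hSv : ∀ (i : Fin (m + 1)) (j : Fin (2 ^ (i : ℕ))), GadgetV.tree 0 i j ∈ Sv)
  (T : TDDecomp (SimpleGraph.induce Sv (gadget G e))) (β : ℕ)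

include hSv

/-- base case (d = m) shared by claims A and A' -/
theorem lemA'base : ∀ (j1 j2 : ℕ), j1 < 2 ^ m → j2 < 2 ^ m →
    ∀ (x y : ↥Sv) (ℓx ℓy : ℕ) (hℓx : ℓx < 2 ^ m) (hℓy : ℓy < 2 ^ m),
    isDang x.1 → isDang y.1 →
    (SimpleGraph.induce Sv (gadget G e)).Adj x (tv Sv hSv m le_rfl ℓx hℓx) →
    (SimpleGraph.induce Sv (gadget G e)).Adj y (tv Sv hSv m le_rfl ℓy hℓy) →
    (SimpleGraph.induce Sv (gadget G e)).Adj x y →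
    ℓx / 2 ^ (m - m) = j1 → ℓy / 2 ^ (m - m) = j2 →
    3 ≤ gadgetW β x.1 + gadgetW β y.1 → gadgetW β x.1 ≤ 3 → gadgetW β y.1 ≤ 3 →
    ∃ C : Finset ↥Sv, T.IsChain C ∧
      (∀ v ∈ C, isDesc m m j1 v.1 ∨ isDesc m m j2 v.1 ∨ v = x ∨ v = y) ∧
      sfun m β m + 3 ≤ ∑ v ∈ C, gadgetW β v.1 := by
  intro j1 j2 hj1 hj2 x y ℓx ℓy hℓx hℓy hdangx hdangy hadjx hadjy hadjxy hanc1 hanc2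
    hsum hwx hwy
  classical
  set X : Finset ↥Sv := insert x (insert y (DescF Sv m j1 ∪ DescF Sv m j2)) with hXdef
  have hsub1 : ∀ v : ↥Sv, isDesc m m j1 v.1 → v ∈ X := fun v hv =>
    Finset.mem_insert_of_mem (Finset.mem_insert_of_mem
      (Finset.mem_union_left _ ((mem_DescF Sv).2 hv)))
  have hsub2 : ∀ v : ↥Sv, isDesc m m j2 v.1 → v ∈ X := fun v hv =>
    Finset.mem_insert_of_mem (Finset.mem_insert_of_mem
      (Finset.mem_union_right _ ((mem_DescF Sv).2 hv)))
  have hxX : x ∈ X := Finset.mem_insert_self _ _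
  have hyX : y ∈ X := Finset.mem_insert_of_mem (Finset.mem_insert_self _ _)
  have hxyne : x ≠ y := hadjxy.ne
  obtain ⟨r, hrX, hrle⟩ := exists_least T X ⟨x, hxX⟩
    (hconnA' G e Sv hSv T m j1 j2 le_rfl hj1 hj2 x y ℓx ℓy hℓx hℓy hadjx hadjy hadjxy
      hanc1 hanc2)
  rcases Finset.mem_insert.1 hrX with rfl | hr
  · -- least element is x
    obtain ⟨C', hc, hm, hs⟩ := lemB G e Sv hSv T β m m j2 (by omega) le_rfl hj2 y ℓy hℓy
      hdangy hadjy hanc2 hwy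
    have hrnot : r ∉ C' := by
      intro h
      rcases hm r h with h' | h'
      · exact not_isDesc_of_isDang hdangx _ _ h'
      · exact hxyne h'
    refine ⟨insert r C', chain_insert T C' r hc ?_, ?_, ?_⟩
    · intro c hcin
      rcases hm c hcin with h' | h'
      · exact hrle c (hsub2 c h')
      · subst h'; exact hrle c hyX
    · intro v hv
      rcases Finset.mem_insert.1 hv with rfl | hv'
      · exact Or.inr (Or.inr (Or.inl rfl))
      · rcases hm v hv' with h' | h'
        · exact Or.inr (Or.inl h')
        · exact Or.inr (Or.inr (Or.inr h'))
    · rw [Finset.sum_insert hrnot]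
      omega
  rcases Finset.mem_insert.1 hr with rfl | hrD
  · -- least element is y
    obtain ⟨C', hc, hm, hs⟩ := lemB G e Sv hSv T β m m j1 (by omega) le_rfl hj1 x ℓx hℓx
      hdangx hadjx hanc1 hwx
    have hrnot : r ∉ C' := by
      intro h
      rcases hm r h with h' | h'
      · exact not_isDesc_of_isDang hdangy _ _ h'
      · exact hxyne h'.symm
    refine ⟨insert r C', chain_insert T C' r hc ?_, ?_, ?_⟩
    · intro c hcin
      rcases hm c hcin with h' | h'
      · exact hrle c (hsub1 c h')
      · subst h'; exact hrle c hxX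
    · intro v hv
      rcases Finset.mem_insert.1 hv with rfl | hv'
      · exact Or.inr (Or.inr (Or.inr rfl))
      · rcases hm v hv' with h' | h'
        · exact Or.inl h'
        · exact Or.inr (Or.inr (Or.inl h'))
    · rw [Finset.sum_insert hrnot]
      omega
  · -- least element is a tree vertex (at depth m)
    have hrdesc2 : isDesc m m j1 r.1 ∨ isDesc m m j2 r.1 := by
      rcases Finset.mem_union.1 hrD with h | h
      · exact Or.inl ((mem_DescF Sv).1 h)
      · exact Or.inr ((mem_DescF Sv).1 h)
    have hwr : gadgetW β r.1 = β + 3 * m := by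
      rcases hrdesc2 with h | h <;>
      · obtain ⟨i, j, him, hjlt, hdi, hanc, hw, hiff⟩ := isDesc_elim h β
        rw [hw]; congr 1; omega
    have hrnx : r ≠ x := by
      rcases hrdesc2 with h | h <;> exact ne_of_desc_dang Sv h hdangx
    have hrny : r ≠ y := by
      rcases hrdesc2 with h | h <;> exact ne_of_desc_dang Sv h hdangy
    have hrnot : r ∉ ({x, y} : Finset ↥Sv) := by
      intro h
      rcases Finset.mem_insert.1 h with h | h
      · exact hrnx h
      · rw [Finset.mem_singleton] at h; exact hrny h
    refine ⟨insert r {x, y}, chain_insert T {x, y} r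
      (chain_pair G e Sv T (T.adj_comparable _ _ hadjxy)) ?_, ?_, ?_⟩
    · intro c hcin
      rcases Finset.mem_insert.1 hcin with rfl | hcin
      · exact hrle c hxX
      · rw [Finset.mem_singleton] at hcin; subst hcin; exact hrle c hyX
    · intro v hv
      rcases Finset.mem_insert.1 hv with rfl | hv'
      · rcases hrdesc2 with h | h
        · exact Or.inl h
        · exact Or.inr (Or.inl h)
      · rcases Finset.mem_insert.1 hv' with rfl | hv''
        · exact Or.inr (Or.inr (Or.inl rfl))
        · rw [Finset.mem_singleton] at hv''; subst hv''
          exact Or.inr (Or.inr (Or.inr rfl))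
    · rw [Finset.sum_insert hrnot, Finset.sum_pair hxyne, hwr, sfun_last]
      omega

end Gadget6

end Stmt15Aux
namespace Stmt15Aux

section Gadget7
set_option linter.unusedSectionVars false

variable {V : Type*} [Fintype V] {m : ℕ}
variable (G : SimpleGraph V) (e : V ≃ Fin (2 ^ m)) (Sv : Set (GadgetV V m))
  (hSv : ∀ (i : Fin (m + 1)) (j : Fin (2 ^ (i : ℕ))), GadgetV.tree 0 i j ∈ Sv)
  (T : TDDecomp (SimpleGraph.induce Sv (gadget G e))) (β : ℕ)

include hSv

/-- Claim A': two disjoint subtrees rooted at depth `d`, with adjacent danglers `x, y`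
hanging at leaves of the respective subtrees, guarantee `sfun m β d + 3`. -/
theorem lemA' : ∀ (fuel d j1 j2 : ℕ), m - d ≤ fuel → d ≤ m → j1 < 2 ^ d → j2 < 2 ^ d →
    j1 ≠ j2 →
    ∀ (x y : ↥Sv) (ℓx ℓy : ℕ) (hℓx : ℓx < 2 ^ m) (hℓy : ℓy < 2 ^ m),
    isDang x.1 → isDang y.1 →
    (SimpleGraph.induce Sv (gadget G e)).Adj x (tv Sv hSv m le_rfl ℓx hℓx) →
    (SimpleGraph.induce Sv (gadget G e)).Adj y (tv Sv hSv m le_rfl ℓy hℓy) →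
    (SimpleGraph.induce Sv (gadget G e)).Adj x y →
    ℓx / 2 ^ (m - d) = j1 → ℓy / 2 ^ (m - d) = j2 →
    3 ≤ gadgetW β x.1 + gadgetW β y.1 → gadgetW β x.1 ≤ 3 → gadgetW β y.1 ≤ 3 →
    ∃ C : Finset ↥Sv, T.IsChain C ∧
      (∀ v ∈ C, isDesc m d j1 v.1 ∨ isDesc m d j2 v.1 ∨ v = x ∨ v = y) ∧
      sfun m β d + 3 ≤ ∑ v ∈ C, gadgetW β v.1 := by
  classical
  intro fuel
  induction fuel with
  | zero =>
    intro d j1 j2 hfuel hd hj1 hj2 hne x y ℓx ℓy hℓx hℓy hdangx hdangy hadjx hadjy hadjxy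
      hanc1 hanc2 hsum hwx hwy
    have hmd : m = d := by omega
    subst hmd
    exact lemA'base G e Sv hSv T β j1 j2 hj1 hj2 x y ℓx ℓy hℓx hℓy hdangx hdangy
      hadjx hadjy hadjxy hanc1 hanc2 hsum hwx hwy
  | succ fuel ih =>
    intro d j1 j2 hfuel hd hj1 hj2 hne x y ℓx ℓy hℓx hℓy hdangx hdangy hadjx hadjy hadjxy
      hanc1 hanc2 hsum hwx hwy
    by_cases hdm : m = d
    · subst hdm
      exact lemA'base G e Sv hSv T β j1 j2 hj1 hj2 x y ℓx ℓy hℓx hℓy hdangx hdangy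
        hadjx hadjy hadjxy hanc1 hanc2 hsum hwx hwy
    have hdlt : d < m := by omega
    set X : Finset ↥Sv := insert x (insert y (DescF Sv d j1 ∪ DescF Sv d j2)) with hXdef
    have hsub1 : ∀ v : ↥Sv, isDesc m d j1 v.1 → v ∈ X := fun v hv =>
      Finset.mem_insert_of_mem (Finset.mem_insert_of_mem
        (Finset.mem_union_left _ ((mem_DescF Sv).2 hv)))
    have hsub2 : ∀ v : ↥Sv, isDesc m d j2 v.1 → v ∈ X := fun v hv =>
      Finset.mem_insert_of_mem (Finset.mem_insert_of_mem
        (Finset.mem_union_right _ ((mem_DescF Sv).2 hv)))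
    have hxX : x ∈ X := Finset.mem_insert_self _ _
    have hyX : y ∈ X := Finset.mem_insert_of_mem (Finset.mem_insert_self _ _)
    have hxyne : x ≠ y := hadjxy.ne
    obtain ⟨r, hrX, hrle⟩ := exists_least T X ⟨x, hxX⟩
      (hconnA' G e Sv hSv T d j1 j2 hd hj1 hj2 x y ℓx ℓy hℓx hℓy hadjx hadjy hadjxy
        hanc1 hanc2)
    rcases Finset.mem_insert.1 hrX with rfl | hr
    · -- least element is x
      obtain ⟨C', hc, hmem, hs⟩ := lemB G e Sv hSv T β m d j2 (by omega) hd hj2 y ℓy hℓy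
        hdangy hadjy hanc2 hwy
      have hrnot : r ∉ C' := by
        intro h
        rcases hmem r h with h' | h'
        · exact not_isDesc_of_isDang hdangx _ _ h'
        · exact hxyne h'
      refine ⟨insert r C', chain_insert T C' r hc ?_, ?_, ?_⟩
      · intro c hcin
        rcases hmem c hcin with h' | h'
        · exact hrle c (hsub2 c h')
        · subst h'; exact hrle c hyX
      · intro v hv
        rcases Finset.mem_insert.1 hv with rfl | hv'
        · exact Or.inr (Or.inr (Or.inl rfl))
        · rcases hmem v hv' with h' | h'
          · exact Or.inr (Or.inl h')
          · exact Or.inr (Or.inr (Or.inr h'))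
      · rw [Finset.sum_insert hrnot]
        omega
    rcases Finset.mem_insert.1 hr with rfl | hrD
    · -- least element is y
      obtain ⟨C', hc, hmem, hs⟩ := lemB G e Sv hSv T β m d j1 (by omega) hd hj1 x ℓx hℓx
        hdangx hadjx hanc1 hwx
      have hrnot : r ∉ C' := by
        intro h
        rcases hmem r h with h' | h'
        · exact not_isDesc_of_isDang hdangy _ _ h'
        · exact hxyne h'.symm
      refine ⟨insert r C', chain_insert T C' r hc ?_, ?_, ?_⟩
      · intro c hcin
        rcases hmem c hcin with h' | h'
        · exact hrle c (hsub1 c h')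
        · subst h'; exact hrle c hxX
      · intro v hv
        rcases Finset.mem_insert.1 hv with rfl | hv'
        · exact Or.inr (Or.inr (Or.inr rfl))
        · rcases hmem v hv' with h' | h'
          · exact Or.inl h'
          · exact Or.inr (Or.inr (Or.inl h'))
      · rw [Finset.sum_insert hrnot]
        omega
    · -- least element is a tree vertex
      -- set up the two children subtrees holding the leaves of x and y
      have hcxlt : ℓx / 2 ^ (m - (d + 1)) < 2 ^ (d + 1) := child_lt hdlt hℓx
      have hcylt : ℓy / 2 ^ (m - (d + 1)) < 2 ^ (d + 1) := child_lt hdlt hℓy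
      have hcx2 : (ℓx / 2 ^ (m - (d + 1))) / 2 = j1 := child_anc hdlt hanc1
      have hcy2 : (ℓy / 2 ^ (m - (d + 1))) / 2 = j2 := child_anc hdlt hanc2
      have hcxcy : ℓx / 2 ^ (m - (d + 1)) ≠ ℓy / 2 ^ (m - (d + 1)) := by
        intro h
        exact hne (by rw [← hcx2, ← hcy2, h])
      rcases Finset.mem_union.1 hrD with h1 | h1
      · -- r is in the first subtree
        have hrdesc := (mem_DescF Sv).1 h1
        obtain ⟨i, j, him, hjlt, hdi, hancr, hw, hiff⟩ := isDesc_elim hrdesc β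
        by_cases hieq : i = d
        · -- r is the root of the first subtree: recurse at depth d + 1
          obtain ⟨C', hc, hmem, hs⟩ := ih (d + 1) (ℓx / 2 ^ (m - (d + 1)))
            (ℓy / 2 ^ (m - (d + 1))) (by omega) (by omega) hcxlt hcylt hcxcy
            x y ℓx ℓy hℓx hℓy hdangx hdangy hadjx hadjy hadjxy rfl rfl hsum hwx hwy
          have hrnot : r ∉ C' := by
            intro h
            rcases hmem r h with h' | h' | h' | h'
            · have := ((hiff _ _).1 h').1; omega
            · have := ((hiff _ _).1 h').1; omega
            · exact ne_of_desc_dang Sv hrdesc hdangx h'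
            · exact ne_of_desc_dang Sv hrdesc hdangy h'
          refine ⟨insert r C', chain_insert T C' r hc ?_, ?_, ?_⟩
          · intro c hcin
            rcases hmem c hcin with h' | h' | h' | h'
            · exact hrle c (hsub1 c (isDesc_mono _ hcx2 h'))
            · exact hrle c (hsub2 c (isDesc_mono _ hcy2 h'))
            · subst h'; exact hrle c hxX
            · subst h'; exact hrle c hyX
          · intro v hv
            rcases Finset.mem_insert.1 hv with rfl | hv'
            · exact Or.inl hrdesc
            · rcases hmem v hv' with h' | h' | h' | h'
              · exact Or.inl (isDesc_mono _ hcx2 h')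
              · exact Or.inr (Or.inl (isDesc_mono _ hcy2 h'))
              · exact Or.inr (Or.inr (Or.inl h'))
              · exact Or.inr (Or.inr (Or.inr h'))
          · rw [Finset.sum_insert hrnot, hw, sfun_step hdlt]
            omega
        · -- r is strictly below the root of the first subtree: harvest the second
          obtain ⟨C', hc, hmem, hs⟩ := lemC G e Sv hSv T β m d j2 (by omega) hd hj2
          have hrnot : r ∉ C' := by
            intro h
            have h2 := ((hiff d j2).1 (hmem r h)).2
            rw [hancr] at h2
            exact hne h2
          refine ⟨insert r C', chain_insert T C' r hc
            (fun c hcin => hrle c (hsub2 c (hmem c hcin))), ?_, ?_⟩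
          · intro v hv
            rcases Finset.mem_insert.1 hv with rfl | hv'
            · exact Or.inl hrdesc
            · exact Or.inr (Or.inl (hmem v hv'))
          · rw [Finset.sum_insert hrnot, hw]
            omega
      · -- r is in the second subtree (symmetric)
        have hrdesc := (mem_DescF Sv).1 h1
        obtain ⟨i, j, him, hjlt, hdi, hancr, hw, hiff⟩ := isDesc_elim hrdesc β
        by_cases hieq : i = d
        · obtain ⟨C', hc, hmem, hs⟩ := ih (d + 1) (ℓx / 2 ^ (m - (d + 1)))
            (ℓy / 2 ^ (m - (d + 1))) (by omega) (by omega) hcxlt hcylt hcxcy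
            x y ℓx ℓy hℓx hℓy hdangx hdangy hadjx hadjy hadjxy rfl rfl hsum hwx hwy
          have hrnot : r ∉ C' := by
            intro h
            rcases hmem r h with h' | h' | h' | h'
            · have := ((hiff _ _).1 h').1; omega
            · have := ((hiff _ _).1 h').1; omega
            · exact ne_of_desc_dang Sv hrdesc hdangx h'
            · exact ne_of_desc_dang Sv hrdesc hdangy h'
          refine ⟨insert r C', chain_insert T C' r hc ?_, ?_, ?_⟩
          · intro c hcin
            rcases hmem c hcin with h' | h' | h' | h'
            · exact hrle c (hsub1 c (isDesc_mono _ hcx2 h'))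
            · exact hrle c (hsub2 c (isDesc_mono _ hcy2 h'))
            · subst h'; exact hrle c hxX
            · subst h'; exact hrle c hyX
          · intro v hv
            rcases Finset.mem_insert.1 hv with rfl | hv'
            · exact Or.inr (Or.inl hrdesc)
            · rcases hmem v hv' with h' | h' | h' | h'
              · exact Or.inl (isDesc_mono _ hcx2 h')
              · exact Or.inr (Or.inl (isDesc_mono _ hcy2 h'))
              · exact Or.inr (Or.inr (Or.inl h'))
              · exact Or.inr (Or.inr (Or.inr h'))
          · rw [Finset.sum_insert hrnot, hw, sfun_step hdlt]
            omega
        · obtain ⟨C', hc, hmem, hs⟩ := lemC G e Sv hSv T β m d j1 (by omega) hd hj1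
          have hrnot : r ∉ C' := by
            intro h
            have h2 := ((hiff d j1).1 (hmem r h)).2
            rw [hancr] at h2
            exact hne h2.symm
          refine ⟨insert r C', chain_insert T C' r hc
            (fun c hcin => hrle c (hsub1 c (hmem c hcin))), ?_, ?_⟩
          · intro v hv
            rcases Finset.mem_insert.1 hv with rfl | hv'
            · exact Or.inr (Or.inl hrdesc)
            · exact Or.inl (hmem v hv')
          · rw [Finset.sum_insert hrnot, hw]
            omega

end Gadget7

end Stmt15Aux
namespace Stmt15Aux

section Gadget8
set_option linter.unusedSectionVars false

variable {V : Type*} [Fintype V] {m : ℕ}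
variable (G : SimpleGraph V) (e : V ≃ Fin (2 ^ m)) (Sv : Set (GadgetV V m))
  (hSv : ∀ (i : Fin (m + 1)) (j : Fin (2 ^ (i : ℕ))), GadgetV.tree 0 i j ∈ Sv)
  (T : TDDecomp (SimpleGraph.induce Sv (gadget G e))) (β : ℕ)

include hSv

/-- Claim A: a subtree rooted at depth `d` with adjacent danglers `x, y` hanging at
leaves of it guarantees `sfun m β d + 3`. -/
theorem lemA : ∀ (fuel d j0 : ℕ), m - d ≤ fuel → d ≤ m → j0 < 2 ^ d →
    ∀ (x y : ↥Sv) (ℓx ℓy : ℕ) (hℓx : ℓx < 2 ^ m) (hℓy : ℓy < 2 ^ m),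
    isDang x.1 → isDang y.1 →
    (SimpleGraph.induce Sv (gadget G e)).Adj x (tv Sv hSv m le_rfl ℓx hℓx) →
    (SimpleGraph.induce Sv (gadget G e)).Adj y (tv Sv hSv m le_rfl ℓy hℓy) →
    (SimpleGraph.induce Sv (gadget G e)).Adj x y →
    ℓx / 2 ^ (m - d) = j0 → ℓy / 2 ^ (m - d) = j0 →
    3 ≤ gadgetW β x.1 + gadgetW β y.1 → gadgetW β x.1 ≤ 3 → gadgetW β y.1 ≤ 3 →
    ∃ C : Finset ↥Sv, T.IsChain C ∧
      (∀ v ∈ C, isDesc m d j0 v.1 ∨ v = x ∨ v = y) ∧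
      sfun m β d + 3 ≤ ∑ v ∈ C, gadgetW β v.1 := by
  classical
  have base : ∀ (j0 : ℕ), j0 < 2 ^ m →
      ∀ (x y : ↥Sv) (ℓx ℓy : ℕ) (hℓx : ℓx < 2 ^ m) (hℓy : ℓy < 2 ^ m),
      isDang x.1 → isDang y.1 →
      (SimpleGraph.induce Sv (gadget G e)).Adj x (tv Sv hSv m le_rfl ℓx hℓx) →
      (SimpleGraph.induce Sv (gadget G e)).Adj y (tv Sv hSv m le_rfl ℓy hℓy) →
      (SimpleGraph.induce Sv (gadget G e)).Adj x y →
      ℓx / 2 ^ (m - m) = j0 → ℓy / 2 ^ (m - m) = j0 →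
      3 ≤ gadgetW β x.1 + gadgetW β y.1 → gadgetW β x.1 ≤ 3 → gadgetW β y.1 ≤ 3 →
      ∃ C : Finset ↥Sv, T.IsChain C ∧
        (∀ v ∈ C, isDesc m m j0 v.1 ∨ v = x ∨ v = y) ∧
        sfun m β m + 3 ≤ ∑ v ∈ C, gadgetW β v.1 := by
    intro j0 hj0 x y ℓx ℓy hℓx hℓy hdangx hdangy hadjx hadjy hadjxy hanc1 hanc2
      hsum hwx hwy
    obtain ⟨C, hc, hmem, hs⟩ := lemA'base G e Sv hSv T β j0 j0 hj0 hj0 x y ℓx ℓy hℓx hℓy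
      hdangx hdangy hadjx hadjy hadjxy hanc1 hanc2 hsum hwx hwy
    refine ⟨C, hc, ?_, hs⟩
    intro v hv
    rcases hmem v hv with h | h | h | h
    · exact Or.inl h
    · exact Or.inl h
    · exact Or.inr (Or.inl h)
    · exact Or.inr (Or.inr h)
  intro fuel
  induction fuel with
  | zero =>
    intro d j0 hfuel hd hj0 x y ℓx ℓy hℓx hℓy hdangx hdangy hadjx hadjy hadjxy
      hanc1 hanc2 hsum hwx hwy
    have hmd : m = d := by omega
    subst hmd
    exact base j0 hj0 x y ℓx ℓy hℓx hℓy hdangx hdangy hadjx hadjy hadjxy hanc1 hanc2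
      hsum hwx hwy
  | succ fuel ih =>
    intro d j0 hfuel hd hj0 x y ℓx ℓy hℓx hℓy hdangx hdangy hadjx hadjy hadjxy
      hanc1 hanc2 hsum hwx hwy
    by_cases hdm : m = d
    · subst hdm
      exact base j0 hj0 x y ℓx ℓy hℓx hℓy hdangx hdangy hadjx hadjy hadjxy hanc1 hanc2
        hsum hwx hwy
    have hdlt : d < m := by omega
    set X : Finset ↥Sv := insert x (insert y (DescF Sv d j0 ∪ DescF Sv d j0)) with hXdef
    have hsub0 : ∀ v : ↥Sv, isDesc m d j0 v.1 → v ∈ X := fun v hv =>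
      Finset.mem_insert_of_mem (Finset.mem_insert_of_mem
        (Finset.mem_union_left _ ((mem_DescF Sv).2 hv)))
    have hxX : x ∈ X := Finset.mem_insert_self _ _
    have hyX : y ∈ X := Finset.mem_insert_of_mem (Finset.mem_insert_self _ _)
    have hxyne : x ≠ y := hadjxy.ne
    obtain ⟨r, hrX, hrle⟩ := exists_least T X ⟨x, hxX⟩
      (hconnA' G e Sv hSv T d j0 j0 hd hj0 hj0 x y ℓx ℓy hℓx hℓy hadjx hadjy hadjxy
        hanc1 hanc2)
    rcases Finset.mem_insert.1 hrX with rfl | hr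
    · -- least element is x
      obtain ⟨C', hc, hmem, hs⟩ := lemB G e Sv hSv T β m d j0 (by omega) hd hj0 y ℓy hℓy
        hdangy hadjy hanc2 hwy
      have hrnot : r ∉ C' := by
        intro h
        rcases hmem r h with h' | h'
        · exact not_isDesc_of_isDang hdangx _ _ h'
        · exact hxyne h'
      refine ⟨insert r C', chain_insert T C' r hc ?_, ?_, ?_⟩
      · intro c hcin
        rcases hmem c hcin with h' | h'
        · exact hrle c (hsub0 c h')
        · subst h'; exact hrle c hyX
      · intro v hv
        rcases Finset.mem_insert.1 hv with rfl | hv'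
        · exact Or.inr (Or.inl rfl)
        · rcases hmem v hv' with h' | h'
          · exact Or.inl h'
          · exact Or.inr (Or.inr h')
      · rw [Finset.sum_insert hrnot]
        omega
    rcases Finset.mem_insert.1 hr with rfl | hrD
    · -- least element is y
      obtain ⟨C', hc, hmem, hs⟩ := lemB G e Sv hSv T β m d j0 (by omega) hd hj0 x ℓx hℓx
        hdangx hadjx hanc1 hwx
      have hrnot : r ∉ C' := by
        intro h
        rcases hmem r h with h' | h'
        · exact not_isDesc_of_isDang hdangy _ _ h'
        · exact hxyne h'.symm
      refine ⟨insert r C', chain_insert T C' r hc ?_, ?_, ?_⟩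
      · intro c hcin
        rcases hmem c hcin with h' | h'
        · exact hrle c (hsub0 c h')
        · subst h'; exact hrle c hxX
      · intro v hv
        rcases Finset.mem_insert.1 hv with rfl | hv'
        · exact Or.inr (Or.inr rfl)
        · rcases hmem v hv' with h' | h'
          · exact Or.inl h'
          · exact Or.inr (Or.inl h')
      · rw [Finset.sum_insert hrnot]
        omega
    · -- least element is a tree vertex
      have hrdesc : isDesc m d j0 r.1 := by
        rcases Finset.mem_union.1 hrD with h | h <;> exact (mem_DescF Sv).1 h
      obtain ⟨i, j, him, hjlt, hdi, hancr, hw, hiff⟩ := isDesc_elim hrdesc β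
      have hcxlt : ℓx / 2 ^ (m - (d + 1)) < 2 ^ (d + 1) := child_lt hdlt hℓx
      have hcylt : ℓy / 2 ^ (m - (d + 1)) < 2 ^ (d + 1) := child_lt hdlt hℓy
      have hcx2 : (ℓx / 2 ^ (m - (d + 1))) / 2 = j0 := child_anc hdlt hanc1
      have hcy2 : (ℓy / 2 ^ (m - (d + 1))) / 2 = j0 := child_anc hdlt hanc2
      by_cases hieq : i = d
      · -- r is the root: recurse at depth d + 1 (claim A or claim A')
        by_cases hcc : ℓx / 2 ^ (m - (d + 1)) = ℓy / 2 ^ (m - (d + 1))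
        · -- both leaves in the same child subtree
          obtain ⟨C', hc, hmem, hs⟩ := ih (d + 1) (ℓx / 2 ^ (m - (d + 1)))
            (by omega) (by omega) hcxlt x y ℓx ℓy hℓx hℓy hdangx hdangy hadjx hadjy hadjxy
            rfl hcc.symm hsum hwx hwy
          have hrnot : r ∉ C' := by
            intro h
            rcases hmem r h with h' | h' | h'
            · have := ((hiff _ _).1 h').1; omega
            · exact ne_of_desc_dang Sv hrdesc hdangx h'
            · exact ne_of_desc_dang Sv hrdesc hdangy h'
          refine ⟨insert r C', chain_insert T C' r hc ?_, ?_, ?_⟩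
          · intro c hcin
            rcases hmem c hcin with h' | h' | h'
            · exact hrle c (hsub0 c (isDesc_mono _ hcx2 h'))
            · subst h'; exact hrle c hxX
            · subst h'; exact hrle c hyX
          · intro v hv
            rcases Finset.mem_insert.1 hv with rfl | hv'
            · exact Or.inl hrdesc
            · rcases hmem v hv' with h' | h' | h'
              · exact Or.inl (isDesc_mono _ hcx2 h')
              · exact Or.inr (Or.inl h')
              · exact Or.inr (Or.inr h')
          · rw [Finset.sum_insert hrnot, hw, sfun_step hdlt]
            omega
        · -- leaves in different child subtrees
          obtain ⟨C', hc, hmem, hs⟩ := lemA' G e Sv hSv T β m (d + 1)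
            (ℓx / 2 ^ (m - (d + 1))) (ℓy / 2 ^ (m - (d + 1))) (by omega) (by omega)
            hcxlt hcylt hcc x y ℓx ℓy hℓx hℓy hdangx hdangy hadjx hadjy hadjxy rfl rfl
            hsum hwx hwy
          have hrnot : r ∉ C' := by
            intro h
            rcases hmem r h with h' | h' | h' | h'
            · have := ((hiff _ _).1 h').1; omega
            · have := ((hiff _ _).1 h').1; omega
            · exact ne_of_desc_dang Sv hrdesc hdangx h'
            · exact ne_of_desc_dang Sv hrdesc hdangy h'
          refine ⟨insert r C', chain_insert T C' r hc ?_, ?_, ?_⟩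
          · intro c hcin
            rcases hmem c hcin with h' | h' | h' | h'
            · exact hrle c (hsub0 c (isDesc_mono _ hcx2 h'))
            · exact hrle c (hsub0 c (isDesc_mono _ hcy2 h'))
            · subst h'; exact hrle c hxX
            · subst h'; exact hrle c hyX
          · intro v hv
            rcases Finset.mem_insert.1 hv with rfl | hv'
            · exact Or.inl hrdesc
            · rcases hmem v hv' with h' | h' | h' | h'
              · exact Or.inl (isDesc_mono _ hcx2 h')
              · exact Or.inl (isDesc_mono _ hcy2 h')
              · exact Or.inr (Or.inl h')
              · exact Or.inr (Or.inr h')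
          · rw [Finset.sum_insert hrnot, hw, sfun_step hdlt]
            omega
      · -- r strictly below the root: use the child subtree avoiding r
        have hdi1 : d + 1 ≤ i := by omega
        have hcr2 : (j / 2 ^ (i - (d + 1))) / 2 = j0 := by
          rw [Nat.div_div_eq_div_mul]
          have h2 : 2 ^ (i - (d + 1)) * 2 = 2 ^ (i - d) := by
            rw [← pow_succ]; congr 1; omega
          rw [h2, hancr]
        set cr := j / 2 ^ (i - (d + 1)) with hcr
        set c' := if cr = 2 * j0 then 2 * j0 + 1 else 2 * j0 with hc'
        have hp : 2 ^ (d + 1) = 2 ^ d * 2 := pow_succ 2 d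
        have hc'lt : c' < 2 ^ (d + 1) := by rw [hc']; split_ifs <;> omega
        have hc'2 : c' / 2 = j0 := by rw [hc']; split_ifs <;> omega
        have hcrne : c' ≠ cr := by rw [hc']; split_ifs with h <;> omega
        obtain ⟨C', hc, hmem, hs⟩ := lemC G e Sv hSv T β m (d + 1) c' (by omega)
          (by omega) hc'lt
        have hrnot : r ∉ C' := by
          intro hrC
          have h2 := ((hiff (d + 1) c').1 (hmem r hrC)).2
          exact hcrne (by rw [hcr, h2])
        refine ⟨insert r C', chain_insert T C' r hc
          (fun c hcin => hrle c (hsub0 c (isDesc_mono _ hc'2 (hmem c hcin)))), ?_, ?_⟩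
        · intro v hv
          rcases Finset.mem_insert.1 hv with rfl | hv'
          · exact Or.inl hrdesc
          · exact Or.inl (isDesc_mono _ hc'2 (hmem v hv'))
        · rw [Finset.sum_insert hrnot, hw, sfun_step hdlt]
          omega

end Gadget8

end Stmt15Aux
namespace Stmt15Aux

/-- a trivial treedepth decomposition given by any linear order -/
noncomputable def trivDecomp {γ : Type*} [Fintype γ] (H : SimpleGraph γ) : TDDecomp H :=
  letI f := Fintype.equivFin γ
  { le := fun a b => f a ≤ f b
    le_refl := fun _ => le_rfl
    le_antisymm := fun _ _ h1 h2 => f.injective (le_antisymm h1 h2)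
    le_trans := fun _ _ _ => le_trans
    down_linear := fun _ y z _ _ => le_total (f y) (f z)
    adj_comparable := fun u v _ => le_total (f u) (f v) }

end Stmt15Aux

theorem stmt15' {V : Type*} [Fintype V] (G : SimpleGraph V) (m : ℕ) (hm : 1 ≤ m)
    (hcard : Fintype.card V = 2 ^ m) (e : V ≃ Fin (2 ^ m))
    (hdeg : ∀ v : V, (G.neighborSet v).ncard = 3)
    (k : ℕ) (hk1 : 1 < k) (hk2 : k < Fintype.card V - 1)
    (β α : ℕ)
    (hβ : β = 3 * Fintype.card V + k + 3)
    (hα : α = ∑ i ∈ Finset.range (m + 1), (β + 3 * i))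
    (D : Set (GadgetV V m))
    (hD : D ⊆ {x | ∃ v : V, x = GadgetV.copy v 0 ∨ x = GadgetV.guard v 0})
    (hedge : ∃ x ∈ D, ∃ y ∈ D, (gadget G e).Adj x y) :
    α + 3 ≤ wtd (SimpleGraph.induce
        ({x | ∃ (i : Fin (m + 1)) (j : Fin (2 ^ i.val)), x = GadgetV.tree 0 i j} ∪ D)
        (gadget G e))
      (fun x => gadgetW β x.1) := by
  classical
  open Stmt15Aux in
  set Sv : Set (GadgetV V m) :=
    {x | ∃ (i : Fin (m + 1)) (j : Fin (2 ^ i.val)), x = GadgetV.tree 0 i j} ∪ D with hSvdef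
  have hSv : ∀ (i : Fin (m + 1)) (j : Fin (2 ^ (i : ℕ))), GadgetV.tree 0 i j ∈ Sv :=
    fun i j => Or.inl ⟨i, j, rfl⟩
  obtain ⟨x', hxD, y', hyD, hadj'⟩ := hedge
  have hxSv : x' ∈ Sv := Or.inr hxD
  have hySv : y' ∈ Sv := Or.inr hyD
  obtain ⟨u, hu⟩ := hD hxD
  obtain ⟨w, hw⟩ := hD hyD
  set x : ↥Sv := ⟨x', hxSv⟩ with hxdef
  set y : ↥Sv := ⟨y', hySv⟩ with hydef
  have hadjH : (SimpleGraph.induce Sv (gadget G e)).Adj x y := hadj'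
  have hx1 : x.1 = GadgetV.copy u 0 ∨ x.1 = GadgetV.guard u 0 := hu
  have hy1 : y.1 = GadgetV.copy w 0 ∨ y.1 = GadgetV.guard w 0 := hw
  have hdangx : Stmt15Aux.isDang x.1 := by
    rcases hx1 with h | h <;> rw [h] <;> trivial
  have hdangy : Stmt15Aux.isDang y.1 := by
    rcases hy1 with h | h <;> rw [h] <;> trivial
  have hwx3 : gadgetW β x.1 ≤ 3 := by
    rcases hx1 with h | h <;> rw [h] <;> simp [gadgetW]
  have hwy3 : gadgetW β y.1 ≤ 3 := by
    rcases hy1 with h | h <;> rw [h] <;> simp [gadgetW]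
  have hsum3 : 3 ≤ gadgetW β x.1 + gadgetW β y.1 := by
    rcases hx1 with h | h <;> rcases hy1 with h' | h' <;> rw [h, h'] <;>
        simp [gadgetW]
    -- remaining case: both guards, contradicting adjacency
    exfalso
    have hxg : x' = GadgetV.guard u 0 := h
    have hyg : y' = GadgetV.guard w 0 := h'
    rcases hadj' with ⟨hne, hrel | hrel⟩ <;> rw [hxg, hyg] at hrel <;> exact hrel
  have hadjx := Stmt15Aux.adj_dang_leaf G e Sv hSv u x hx1
  have hadjy := Stmt15Aux.adj_dang_leaf G e Sv hSv w y hy1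
  have hancx : ((e u : Fin (2 ^ m)) : ℕ) / 2 ^ (m - 0) = 0 := by
    apply Nat.div_eq_of_lt
    simpa using (e u).isLt
  have hancy : ((e w : Fin (2 ^ m)) : ℕ) / 2 ^ (m - 0) = 0 := by
    apply Nat.div_eq_of_lt
    simpa using (e w).isLt
  have hsfun : Stmt15Aux.sfun m β 0 = α := by
    rw [hα, Stmt15Aux.sfun]
    congr 1
    rw [Finset.range_eq_Ico, Finset.Ico_add_one_right_eq_Icc]
  -- lower-bound the weighted depth of every decomposition
  have hmain : ∀ T : TDDecomp (SimpleGraph.induce Sv (gadget G e)),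
      α + 3 ≤ T.weightedDepth (fun v => gadgetW β v.1) := by
    intro T
    obtain ⟨C, hchain, _, hsum⟩ := Stmt15Aux.lemA G e Sv hSv T β m 0 0 (by omega)
      (by omega) (by norm_num) x y _ _ (e u).isLt (e w).isLt hdangx hdangy hadjx hadjy
      hadjH hancx hancy hsum3 hwx3 hwy3
    rw [hsfun] at hsum
    have hbdd : BddAbove {s | ∃ C : Finset ↥Sv, T.IsChain C ∧
        s = C.sum (fun v => gadgetW β v.1)} := by
      refine ⟨∑ v ∈ (Finset.univ : Finset ↥Sv), gadgetW β v.1, ?_⟩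
      rintro s ⟨C', _, rfl⟩
      exact Finset.sum_le_sum_of_subset (Finset.subset_univ C')
    exact le_trans hsum (le_csSup hbdd ⟨C, hchain, rfl⟩)
  refine le_csInf ⟨_, Stmt15Aux.trivDecomp _, rfl⟩ ?_
  rintro b ⟨T, rfl⟩
  exact hmain T

/-- Let `H` be the subgraph of the gadget graph `G'` induced by
`V(T_1) ∪ D`, where the set `D` of dangling vertices consists of vertices of the form
`v_1` or `v_{g1}`. If some two dangling vertices are adjacent in `G'`, then
`wtd H ≥ α + 3`. -/
theorem stmt15 {V : Type*} [Fintype V] (G : SimpleGraph V) (m : ℕ) (hm : 1 ≤ m)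
    (hcard : Fintype.card V = 2 ^ m) (e : V ≃ Fin (2 ^ m))
    (hdeg : ∀ v : V, (G.neighborSet v).ncard = 3)
    (k : ℕ) (hk1 : 1 < k) (hk2 : k < Fintype.card V - 1)
    (β α : ℕ)
    (hβ : β = 3 * Fintype.card V + k + 3)
    (hα : α = ∑ i ∈ Finset.range (m + 1), (β + 3 * i))
    (D : Set (GadgetV V m))
    (hD : D ⊆ {x | ∃ v : V, x = GadgetV.copy v 0 ∨ x = GadgetV.guard v 0})
    (hedge : ∃ x ∈ D, ∃ y ∈ D, (gadget G e).Adj x y) :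
    α + 3 ≤ wtd (SimpleGraph.induce
        ({x | ∃ (i : Fin (m + 1)) (j : Fin (2 ^ i.val)), x = GadgetV.tree 0 i j} ∪ D)
        (gadget G e))
      (fun x => gadgetW β x.1) := by
  exact stmt15' G m hm hcard e hdeg k hk1 hk2 β α hβ hα D hD hedge
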